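/- Let μ be a probability measure on the measurable space Ω, let Q be a probability measure, L : Ω → [0,∞) a measurable function with a measurable L̃ satisfying 0 ≤ L̃ ≤ L, ∫ L̃ dQ = 1 − o(1) and ∫ L̃² dQ ≤ C for a fixed constant C. If P is the measure with density L with respect to Q, then for any sequence of events A_n with Q(A_n) → 0, one has P(A_n) → 0 (i.e., P is contiguous with respect to Q). -/

import Mathlib

open MeasureTheory Filter
open scoped ENNReal

/-- Contiguity via a truncated second moment: if `0 ≤ L̃ ≤ L`,
`∫ L̃ dQ = 1 − o(1)`, `∫ L̃² dQ ≤ C < ∞`, and `P = Q.withDensity L` is a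
probability measure, then `Q(Aₙ) → 0` implies `P(Aₙ) → 0`. -/
theorem stmt7 {Ω : Type*} [MeasurableSpace Ω]
    (Q : ℕ → Measure Ω) (hQprob : ∀ n, IsProbabilityMeasure (Q n))
    (L Lt : ℕ → Ω → ℝ≥0∞)
    (hL : ∀ n, Measurable (L n)) (hLt : ∀ n, Measurable (Lt n))
    (hle : ∀ n ω, Lt n ω ≤ L n ω)
    (hmean : Tendsto (fun n => ∫⁻ ω, Lt n ω ∂(Q n)) atTop (nhds 1))
    (C : ℝ≥0∞) (hC : C < ⊤)
    (hsecond : ∀ n, ∫⁻ ω, (Lt n ω) ^ 2 ∂(Q n) ≤ C)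
    (hPprob : ∀ n, IsProbabilityMeasure ((Q n).withDensity (L n)))
    (A : ℕ → Set Ω) (hA : ∀ n, MeasurableSet (A n))
    (hQA : Tendsto (fun n => Q n (A n)) atTop (nhds 0)) :
    Tendsto (fun n => (Q n).withDensity (L n) (A n)) atTop (nhds 0) := by
  have hLint : ∀ n, ∫⁻ ω, L n ω ∂(Q n) = 1 := by
    intro n
    have := (hPprob n).measure_univ
    rwa [withDensity_apply _ MeasurableSet.univ, setLIntegral_univ] at this
  have hLtint : ∀ n, ∫⁻ ω, Lt n ω ∂(Q n) ≤ 1 := fun n =>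
    (lintegral_mono (hle n)).trans (hLint n).le
  -- Cauchy–Schwarz bound for the truncated part
  have hCS : ∀ n, ∫⁻ ω in A n, Lt n ω ∂(Q n) ≤ (C * Q n (A n)) ^ (1/2 : ℝ) := by
    intro n
    have hconj : Real.HolderConjugate 2 2 := Real.holderConjugate_iff.mpr ⟨one_lt_two, by norm_num⟩
    have hind : Measurable ((A n).indicator (fun _ => (1 : ℝ≥0∞))) :=
      measurable_const.indicator (hA n)
    have h := ENNReal.lintegral_mul_le_Lp_mul_Lq (Q n) hconj
      (hLt n).aemeasurable hind.aemeasurable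
    have heq1 : ∫⁻ a, (Lt n * (A n).indicator (fun _ => (1:ℝ≥0∞))) a ∂(Q n)
        = ∫⁻ ω in A n, Lt n ω ∂(Q n) := by
      rw [← lintegral_indicator (hA n)]
      refine lintegral_congr fun a => ?_
      by_cases ha : a ∈ A n <;>
        simp [Set.indicator_of_mem, Set.indicator_of_notMem, ha]
    have heq2 : ∫⁻ a, ((A n).indicator (fun _ => (1:ℝ≥0∞)) a) ^ (2:ℝ) ∂(Q n)
        = Q n (A n) := by
      rw [← lintegral_indicator_one (hA n)]
      refine lintegral_congr fun a => ?_
      by_cases ha : a ∈ A n <;>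
        simp [Set.indicator_of_mem, Set.indicator_of_notMem, ha]
    have heq3 : ∫⁻ a, Lt n a ^ (2:ℝ) ∂(Q n) = ∫⁻ a, Lt n a ^ 2 ∂(Q n) := by
      refine lintegral_congr fun a => ?_
      rw [← ENNReal.rpow_natCast (Lt n a) 2]; norm_num
    rw [heq1, heq2, heq3] at h
    refine h.trans ?_
    rw [ENNReal.mul_rpow_of_nonneg _ _ (by norm_num : (0:ℝ) ≤ 1/2)]
    gcongr
    exact hsecond n
  -- key pointwise bound
  have hbound : ∀ n, (Q n).withDensity (L n) (A n) ≤
      (1 - ∫⁻ ω, Lt n ω ∂(Q n)) + (C * Q n (A n)) ^ (1/2 : ℝ) := by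
    intro n
    rw [withDensity_apply _ (hA n)]
    have h1 : ∫⁻ ω in A n, L n ω ∂(Q n)
        ≤ ∫⁻ ω in A n, (L n ω - Lt n ω) ∂(Q n) + ∫⁻ ω in A n, Lt n ω ∂(Q n) := by
      rw [← lintegral_add_right' _ (hLt n).aemeasurable]
      exact lintegral_mono fun ω => (tsub_add_cancel_of_le (hle n ω)).ge
    have h2 : ∫⁻ ω in A n, (L n ω - Lt n ω) ∂(Q n)
        ≤ 1 - ∫⁻ ω, Lt n ω ∂(Q n) := by
      calc ∫⁻ ω in A n, (L n ω - Lt n ω) ∂(Q n)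
          ≤ ∫⁻ ω, (L n ω - Lt n ω) ∂(Q n) := setLIntegral_le_lintegral _ _
        _ = ∫⁻ ω, L n ω ∂(Q n) - ∫⁻ ω, Lt n ω ∂(Q n) :=
            lintegral_sub (hLt n)
              (lt_of_le_of_lt (hLtint n) ENNReal.one_lt_top).ne
              (ae_of_all _ (hle n))
        _ = 1 - ∫⁻ ω, Lt n ω ∂(Q n) := by rw [hLint n]
    exact h1.trans (add_le_add h2 (hCS n))
  -- the upper bound tends to zero
  have hub : Tendsto (fun n => (1 - ∫⁻ ω, Lt n ω ∂(Q n))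
      + (C * Q n (A n)) ^ (1/2 : ℝ)) atTop (nhds 0) := by
    have t1 : Tendsto (fun n => (1:ℝ≥0∞) - ∫⁻ ω, Lt n ω ∂(Q n)) atTop (nhds 0) := by
      have := ENNReal.Tendsto.sub (tendsto_const_nhds (x := (1:ℝ≥0∞))) hmean
        (Or.inl ENNReal.one_ne_top)
      simpa using this
    have t2 : Tendsto (fun n => (C * Q n (A n)) ^ (1/2 : ℝ)) atTop (nhds 0) := by
      have hm : Tendsto (fun n => C * Q n (A n)) atTop (nhds 0) := by
        have := ENNReal.Tendsto.const_mul hQA (Or.inr hC.ne)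
        simpa using this
      have := (ENNReal.continuous_rpow_const (y := (1/2 : ℝ))).tendsto 0 |>.comp hm
      simpa [Function.comp_def, ENNReal.zero_rpow_of_pos (by norm_num : (0:ℝ) < 1/2)] using this
    simpa using t1.add t2
  exact tendsto_of_tendsto_of_tendsto_of_le_of_le tendsto_const_nhds hub
    (fun n => zero_le) hbound
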